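/- Let P and Q be probability measures, X ~ Q, T a nonnegative statistic with E^P[T(X)] < 1, 0 < E^Q[T(X)] < ∞, and log T(X) integrable under Q. Let Y^{(1)}, Y^{(2)}, ... be i.i.d. from P, independent of X, with E[T̃] := E^P[T(Y^{(1)})] = E^P[T(X)] < 1, and suppose for each M the variable T(X)/(M+1) + Σ_{m=1}^M T(Y^{(m)})/(M+1) is not almost surely constant under Q. Define M_*^Q = min{ M ∈ ℕ : E^Q[T(X)] − 1 < M·(1 − E[T̃]) }. Then M_*^Q is finite, and for every M ≥ M_*^Q, the Besag-Clifford e-value Ê_M(X) = (M+1)·T(X) / (T(X) + Σ_{m=1}^M T(Y^{(m)})) satisfies E^Q[log Ê_M(X)] > E^Q[log T(X)]. -/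

import Mathlib

open MeasureTheory ProbabilityTheory Filter Finset

lemma aux_measurePreserving_eval {ι : Type*} [Fintype ι] {α : ι → Type*}
    [∀ i, MeasurableSpace (α i)] (μ : ∀ i, Measure (α i))
    [∀ i, IsProbabilityMeasure (μ i)] (i : ι) :
    MeasurePreserving (Function.eval i) (Measure.pi μ) (μ i) := by
  classical
  refine ⟨measurable_pi_apply i, ?_⟩
  ext s hs
  rw [Measure.map_apply (measurable_pi_apply i) hs, Set.eval_preimage,
    Measure.pi_pi]
  rw [Finset.prod_eq_single i (fun j _ hj => by simp [Function.update_of_ne hj])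
    (by simp)]
  simp

lemma aux_integral_comp {α β : Type*} [MeasurableSpace α] [MeasurableSpace β]
    {μ : Measure α} {ν : Measure β} {f : α → β} (h : MeasurePreserving f μ ν)
    {g : β → ℝ} (hg : AEStronglyMeasurable g ν) :
    ∫ x, g (f x) ∂μ = ∫ y, g y ∂ν := by
  rw [← h.map_eq, integral_map h.measurable.aemeasurable (h.map_eq ▸ hg)]

/-- **Corollary 1, item 1: e-power domination for large `M`.**
Let `X ~ Q` and let `T` be nonnegative with `E^P[T(X)] < 1`, `0 < E^Q[T(X)] < ∞`,
and `log T(X)` integrable under `Q`. Let `Y⁽¹⁾, Y⁽²⁾, …` be i.i.d. from `P`,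
independent of `X` (encoded via the product measure `Q ⊗ P^{⊗M}`), with
`E[T̃] = E^P[T] < 1`, and suppose for each `M` the denominator
`T(X)/(M+1) + Σ_m T(Y⁽ᵐ⁾)/(M+1)` is not a.s. constant. Then
`M_*^Q = min{M : E^Q[T(X)] − 1 < M·(1 − E[T̃])}` is finite (the set is nonempty),
and for every `M ≥ M_*^Q`, `E^Q[log Ê_M(X)] > E^Q[log T(X)]`. -/
theorem besag_clifford_epower_large_M
    {n : ℕ}
    (P Q : Measure (Fin n → ℝ)) [IsProbabilityMeasure P] [IsProbabilityMeasure Q]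
    (T : (Fin n → ℝ) → ℝ) (hT : Measurable T) (hT0 : ∀ x, 0 ≤ T x)
    (hTint_P : Integrable T P) (hTint_Q : Integrable T Q)
    -- `E[T̃] = E^P[T] < 1`, with `0 < E^P[T]`
    (hTP : ∫ x, T x ∂P < 1) (hTPpos : 0 < ∫ x, T x ∂P)
    -- `0 < E^Q[T] < ∞`
    (hTQpos : 0 < ∫ x, T x ∂Q)
    (hTposQ : ∀ᵐ x ∂Q, 0 < T x)
    (hlogTint : Integrable (fun x => Real.log (T x)) Q)
    (hlogDint : ∀ M : ℕ, Integrable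
      (fun z : (Fin n → ℝ) × (Fin M → (Fin n → ℝ)) =>
        Real.log (T z.1 / ((M : ℝ) + 1) + ∑ m : Fin M, T (z.2 m) / ((M : ℝ) + 1)))
      (Q.prod (Measure.pi fun _ : Fin M => P)))
    (hnondeg : ∀ M : ℕ, ¬ ∃ r : ℝ,
      (fun z : (Fin n → ℝ) × (Fin M → (Fin n → ℝ)) =>
          T z.1 / ((M : ℝ) + 1) + ∑ m : Fin M, T (z.2 m) / ((M : ℝ) + 1))
        =ᵐ[Q.prod (Measure.pi fun _ : Fin M => P)] fun _ => r) :
    {M : ℕ | (∫ x, T x ∂Q) - 1 < (M : ℝ) * (1 - ∫ x, T x ∂P)}.Nonempty ∧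
    ∀ M : ℕ,
      sInf {M : ℕ | (∫ x, T x ∂Q) - 1 < (M : ℝ) * (1 - ∫ x, T x ∂P)} ≤ M →
      (∫ z : (Fin n → ℝ) × (Fin M → (Fin n → ℝ)),
          Real.log (((M : ℝ) + 1) * T z.1 / (T z.1 + ∑ m : Fin M, T (z.2 m)))
        ∂(Q.prod (Measure.pi fun _ : Fin M => P)))
      > ∫ x, Real.log (T x) ∂Q := by
  have hc : 0 < 1 - ∫ x, T x ∂P := by linarith
  -- nonemptiness
  obtain ⟨M0, hM0⟩ := exists_nat_gt (((∫ x, T x ∂Q) - 1) / (1 - ∫ x, T x ∂P))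
  have hne : {M : ℕ | (∫ x, T x ∂Q) - 1 < (M : ℝ) * (1 - ∫ x, T x ∂P)}.Nonempty :=
    ⟨M0, by simpa [Set.mem_setOf_eq] using (div_lt_iff₀ hc).mp hM0⟩
  refine ⟨hne, ?_⟩
  intro M hM
  have hMin := Nat.sInf_mem hne
  have hMmem : (∫ x, T x ∂Q) - 1 < (M : ℝ) * (1 - ∫ x, T x ∂P) :=
    lt_of_lt_of_le hMin
      (mul_le_mul_of_nonneg_right (Nat.cast_le.mpr hM) hc.le)
  -- set up measures
  set ν : Measure (Fin M → (Fin n → ℝ)) := Measure.pi fun _ : Fin M => P with hνdef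
  set μ : Measure ((Fin n → ℝ) × (Fin M → (Fin n → ℝ))) := Q.prod ν with hμdef
  have hfst : MeasurePreserving Prod.fst μ Q :=
    ⟨measurable_fst, by simp [hμdef]⟩
  have hsnd : MeasurePreserving Prod.snd μ ν :=
    ⟨measurable_snd, by simp [hμdef]⟩
  have heval : ∀ m : Fin M,
      MeasurePreserving (fun z : (Fin n → ℝ) × (Fin M → (Fin n → ℝ)) => z.2 m) μ P :=
    fun m => (aux_measurePreserving_eval (fun _ : Fin M => P) m).comp hsnd
  -- integrabilities
  have hTfst : Integrable (fun z : (Fin n → ℝ) × (Fin M → (Fin n → ℝ)) => T z.1) μ :=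
    (hfst.integrable_comp hT.aestronglyMeasurable).mpr hTint_Q
  have hTm : ∀ m : Fin M,
      Integrable (fun z : (Fin n → ℝ) × (Fin M → (Fin n → ℝ)) => T (z.2 m)) μ :=
    fun m => ((heval m).integrable_comp hT.aestronglyMeasurable).mpr hTint_P
  have hsumInt : Integrable
      (fun z : (Fin n → ℝ) × (Fin M → (Fin n → ℝ)) =>
        ∑ m : Fin M, T (z.2 m) / ((M : ℝ) + 1)) μ :=
    integrable_finset_sum _ (fun m _ => (hTm m).div_const _)
  have hD : Integrable
      (fun z : (Fin n → ℝ) × (Fin M → (Fin n → ℝ)) =>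
        T z.1 / ((M : ℝ) + 1) + ∑ m : Fin M, T (z.2 m) / ((M : ℝ) + 1)) μ :=
    (hTfst.div_const _).add hsumInt
  -- expectation of D
  have hDint_eq : ∫ z, (T z.1 / ((M : ℝ) + 1)
        + ∑ m : Fin M, T (z.2 m) / ((M : ℝ) + 1)) ∂μ
      = (∫ x, T x ∂Q) / ((M : ℝ) + 1)
        + (M : ℝ) * (∫ x, T x ∂P) / ((M : ℝ) + 1) := by
    rw [integral_add (hTfst.div_const _) hsumInt, integral_div,
      integral_finset_sum _ (fun m _ => (hTm m).div_const _)]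
    have h1 : ∫ z : (Fin n → ℝ) × (Fin M → (Fin n → ℝ)), T z.1 ∂μ = ∫ x, T x ∂Q :=
      aux_integral_comp hfst hT.aestronglyMeasurable
    have h2 : ∀ m : Fin M,
        ∫ z : (Fin n → ℝ) × (Fin M → (Fin n → ℝ)), T (z.2 m) / ((M : ℝ) + 1) ∂μ
          = (∫ x, T x ∂P) / ((M : ℝ) + 1) := by
      intro m
      rw [integral_div, aux_integral_comp (heval m) hT.aestronglyMeasurable]
    rw [h1, Finset.sum_congr rfl (fun m _ => h2 m), Finset.sum_const]
    simp [mul_div_assoc, mul_comm]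
  have hDlt1 : ∫ z, (T z.1 / ((M : ℝ) + 1)
        + ∑ m : Fin M, T (z.2 m) / ((M : ℝ) + 1)) ∂μ < 1 := by
    rw [hDint_eq]
    have hM1 : (0 : ℝ) < (M : ℝ) + 1 := by positivity
    rw [← add_div, div_lt_one hM1]
    linarith
  -- a.e. positivity
  have hposfst : ∀ᵐ z ∂μ, 0 < T z.1 :=
    hfst.quasiMeasurePreserving.ae hTposQ
  have hDpos : ∀ᵐ z ∂μ, 0 < T z.1 / ((M : ℝ) + 1)
      + ∑ m : Fin M, T (z.2 m) / ((M : ℝ) + 1) := by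
    filter_upwards [hposfst] with z hz
    have h1 : 0 < T z.1 / ((M : ℝ) + 1) := div_pos hz (by positivity)
    have h2 : 0 ≤ ∑ m : Fin M, T (z.2 m) / ((M : ℝ) + 1) :=
      Finset.sum_nonneg fun m _ => div_nonneg (hT0 _) (by positivity)
    linarith
  -- ∫ log D < 0
  have hlogD_lt : ∫ z, Real.log (T z.1 / ((M : ℝ) + 1)
      + ∑ m : Fin M, T (z.2 m) / ((M : ℝ) + 1)) ∂μ < 0 := by
    have hle : ∫ z, Real.log (T z.1 / ((M : ℝ) + 1)
        + ∑ m : Fin M, T (z.2 m) / ((M : ℝ) + 1)) ∂μ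
      ≤ ∫ z, ((T z.1 / ((M : ℝ) + 1)
        + ∑ m : Fin M, T (z.2 m) / ((M : ℝ) + 1)) - 1) ∂μ := by
      refine integral_mono_ae (hlogDint M) (hD.sub (integrable_const 1)) ?_
      filter_upwards [hDpos] with z hz
      exact Real.log_le_sub_one_of_pos hz
    rw [integral_sub hD (integrable_const 1), integral_const] at hle
    simp only [Measure.real, measure_univ, ENNReal.toReal_one, smul_eq_mul, one_mul, mul_one] at hle
    linarith
  -- a.e. rewrite of log Ê
  have haeq : ∀ᵐ z ∂μ,
      Real.log (((M : ℝ) + 1) * T z.1 / (T z.1 + ∑ m : Fin M, T (z.2 m)))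
        = Real.log (T z.1)
          - Real.log (T z.1 / ((M : ℝ) + 1)
            + ∑ m : Fin M, T (z.2 m) / ((M : ℝ) + 1)) := by
    filter_upwards [hposfst] with z hz
    have hs : 0 ≤ ∑ m : Fin M, T (z.2 m) := Finset.sum_nonneg fun m _ => hT0 _
    have hden : 0 < T z.1 + ∑ m : Fin M, T (z.2 m) := by linarith
    have hM1 : (0 : ℝ) < (M : ℝ) + 1 := by positivity
    have hDconv : T z.1 / ((M : ℝ) + 1) + ∑ m : Fin M, T (z.2 m) / ((M : ℝ) + 1)
        = (T z.1 + ∑ m : Fin M, T (z.2 m)) / ((M : ℝ) + 1) := by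
      rw [← Finset.sum_div, add_div]
    rw [hDconv, Real.log_div (by positivity) hden.ne',
      Real.log_mul hM1.ne' hz.ne', Real.log_div hden.ne' hM1.ne']
    ring
  -- conclude
  have hint_logT : Integrable
      (fun z : (Fin n → ℝ) × (Fin M → (Fin n → ℝ)) => Real.log (T z.1)) μ :=
    (hfst.integrable_comp hlogTint.aestronglyMeasurable).mpr hlogTint
  calc ∫ z : (Fin n → ℝ) × (Fin M → (Fin n → ℝ)),
        Real.log (((M : ℝ) + 1) * T z.1 / (T z.1 + ∑ m : Fin M, T (z.2 m))) ∂μ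
      = ∫ z : (Fin n → ℝ) × (Fin M → (Fin n → ℝ)),
          (Real.log (T z.1) - Real.log (T z.1 / ((M : ℝ) + 1)
            + ∑ m : Fin M, T (z.2 m) / ((M : ℝ) + 1))) ∂μ :=
        integral_congr_ae haeq
    _ = (∫ z : (Fin n → ℝ) × (Fin M → (Fin n → ℝ)), Real.log (T z.1) ∂μ)
          - ∫ z, Real.log (T z.1 / ((M : ℝ) + 1)
            + ∑ m : Fin M, T (z.2 m) / ((M : ℝ) + 1)) ∂μ :=
        integral_sub hint_logT (hlogDint M)
    _ = (∫ x, Real.log (T x) ∂Q)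
          - ∫ z, Real.log (T z.1 / ((M : ℝ) + 1)
            + ∑ m : Fin M, T (z.2 m) / ((M : ℝ) + 1)) ∂μ := by
        rw [aux_integral_comp hfst hlogTint.aestronglyMeasurable]
    _ > ∫ x, Real.log (T x) ∂Q := by linarith
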